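/- Support of the post-C-NOT state of a chain of N + 1 EPR pairs (QQTR/QUR global correctness): fix N ≥ 1 and index 2N + 2 qubits by Fin (2N + 2), the i-th EPR pair occupying positions 2i and 2i + 1 for 0 ≤ i ≤ N. Let Ψ₀ : (Fin (2N + 2) → ZMod 2) → ℂ be the amplitude function of the product of N + 1 Bell states, i.e. Ψ₀ f = (√2)^(-(N+1)) if f (2i) = f (2i + 1) for all 0 ≤ i ≤ N, and Ψ₀ f = 0 otherwise. For positions j, k let the C-NOT on (control j, target k) act on amplitude functions by precomposition with the involution σ_{j,k} sending f to the function equal to f except that its value at k is f k + f j. Let Ψ be obtained from Ψ₀ by applying, for each i = 1, …, N, the C-NOT on control position 2i − 1 and target position 2i (these operations commute). Then for every f : Fin (2N + 2) → ZMod 2 with Ψ f ≠ 0, one has f 0 + f (2N + 1) = ∑_{i = 1}^{N} f (2i); i.e. in every computational basis state in the support of the post-circuit state, the XOR of the two endpoint qubits equals the XOR of the N relay target qubits. -/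

import Mathlib

/-!
Support of the post-C-NOT state of a chain of `N + 1` EPR pairs (QQTR/QUR
global correctness).  Qubit values are elements of `ZMod 2` (addition is XOR),
a computational basis state of `n` qubits is a function `Fin n → ZMod 2`, and
an `n`-qubit state is an amplitude function `(Fin n → ZMod 2) → ℂ`.
-/

noncomputable section

/-- The C-NOT gate with control `j` and target `k`, acting on amplitude
functions by precomposition with the involution sending `f` to the function
equal to `f` except that its value at `k` is `f k + f j`. -/
def cnotAct {n : ℕ} (j k : Fin n) (ψ : (Fin n → ZMod 2) → ℂ) :
    (Fin n → ZMod 2) → ℂ :=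
  fun f => ψ (Function.update f k (f k + f j))

/-- The amplitude function of the product of `N + 1` Bell states on `2N + 2`
qubits, the `i`-th EPR pair occupying positions `2i` and `2i + 1` for
`0 ≤ i ≤ N`: the amplitude is `(√2)^(-(N+1))` on each basis state in which the
values of every pair agree, and `0` elsewhere. -/
def bellChainInit (N : ℕ) : (Fin (2 * N + 2) → ZMod 2) → ℂ :=
  fun f =>
    if ∀ i : Fin (N + 1),
        f ⟨2 * i.val, by have := i.2; omega⟩ = f ⟨2 * i.val + 1, by have := i.2; omega⟩
    then ((Real.sqrt 2 : ℂ)) ^ (-(N + 1 : ℤ))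
    else 0

/-- The state obtained from `bellChainInit N` by applying, for each
`i = 1, …, N`, the C-NOT with control position `2i - 1` and target position
`2i` (these operations commute). -/
def bellChainPost (N : ℕ) : (Fin (2 * N + 2) → ZMod 2) → ℂ :=
  (List.finRange N).foldl
    (fun ψ i =>
      cnotAct ⟨2 * i.val + 1, by have := i.2; omega⟩
        ⟨2 * i.val + 2, by have := i.2; omega⟩ ψ)
    (bellChainInit N)

/-- The basis-state involution implemented by the `i`-th C-NOT. -/
def gateMap (N : ℕ) (i : Fin N) (f : Fin (2 * N + 2) → ZMod 2) :
    Fin (2 * N + 2) → ZMod 2 :=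
  Function.update f ⟨2 * i.val + 2, by have := i.2; omega⟩
    (f ⟨2 * i.val + 2, by have := i.2; omega⟩ + f ⟨2 * i.val + 1, by have := i.2; omega⟩)

lemma foldl_cnot_eq (N : ℕ) (L : List (Fin N)) (ψ : (Fin (2 * N + 2) → ZMod 2) → ℂ)
    (f : Fin (2 * N + 2) → ZMod 2) :
    (L.foldl
      (fun ψ i =>
        cnotAct ⟨2 * i.val + 1, by have := i.2; omega⟩
          ⟨2 * i.val + 2, by have := i.2; omega⟩ ψ) ψ) f
      = ψ (L.foldr (gateMap N) f) := by
  induction L generalizing ψ with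
  | nil => rfl
  | cons a L ih =>
      simp only [List.foldl_cons, List.foldr_cons, ih]
      rfl

lemma gateFold_eval (N : ℕ) (L : List (Fin N)) (hL : L.Nodup)
    (f : Fin (2 * N + 2) → ZMod 2) :
    (∀ i ∈ L, L.foldr (gateMap N) f ⟨2 * i.val + 2, by have := i.2; omega⟩
        = f ⟨2 * i.val + 2, by have := i.2; omega⟩ + f ⟨2 * i.val + 1, by have := i.2; omega⟩)
    ∧ (∀ p : Fin (2 * N + 2), (∀ i ∈ L, p.val ≠ 2 * i.val + 2)
        → L.foldr (gateMap N) f p = f p) := by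
  induction L with
  | nil => exact ⟨fun i hi => absurd hi List.not_mem_nil, fun p _ => rfl⟩
  | cons a L ih =>
      have hnd := List.nodup_cons.mp hL
      obtain ⟨ih1, ih2⟩ := ih hnd.2
      have ha2 : ∀ i ∈ L, (2 * a.val + 2 : ℕ) ≠ 2 * i.val + 2 := by
        intro i hi h
        exact hnd.1 (by
          have : a = i := Fin.ext (by omega)
          rwa [this])
      have ha1 : ∀ i ∈ L, (2 * a.val + 1 : ℕ) ≠ 2 * i.val + 2 := by
        intro i hi h; omega
      constructor
      · intro i hi
        rcases List.mem_cons.mp hi with h | h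
        · subst h
          simp only [List.foldr_cons, gateMap, Function.update_self]
          rw [ih2 _ (ha2), ih2 _ (ha1)]
        · simp only [List.foldr_cons, gateMap]
          rw [Function.update_of_ne, ih1 i h]
          intro he
          exact ha2 i h (congrArg Fin.val he).symm
      · intro p hp
        simp only [List.foldr_cons, gateMap]
        rw [Function.update_of_ne, ih2 p (fun i hi => hp i (List.mem_cons_of_mem a hi))]
        intro he
        exact hp a List.mem_cons_self (congrArg Fin.val he)

lemma telescope (N : ℕ) (g : ℕ → ZMod 2)
    (h : ∀ j < N, g (2 * j + 3) = g (2 * j + 1) + g (2 * j + 2)) :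
    g (2 * N + 1) = g 1 + ∑ j ∈ Finset.range N, g (2 * j + 2) := by
  induction N with
  | zero => simp
  | succ n ih =>
      rw [Finset.sum_range_succ, ← add_assoc, ← ih (fun j hj => h j (by omega))]
      have e : 2 * (n + 1) + 1 = 2 * n + 3 := by ring
      rw [e, h n (by omega)]

/-- In every computational basis state in the support of the post-circuit
state, the XOR of the two endpoint qubits (positions `0` and `2N + 1`) equals
the XOR of the `N` relay target qubits (positions `2i`, `i = 1, …, N`). -/
theorem bellChainPost_support_parity (N : ℕ) (hN : 1 ≤ N)
    (f : Fin (2 * N + 2) → ZMod 2) (hf : bellChainPost N f ≠ 0) :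
    f ⟨0, by omega⟩ + f ⟨2 * N + 1, by omega⟩ =
      ∑ i : Fin N, f ⟨2 * (i.val + 1), by have := i.2; omega⟩ := by
  rw [bellChainPost, foldl_cnot_eq] at hf
  set g := (List.finRange N).foldr (gateMap N) f with hg
  rw [bellChainInit] at hf
  have hcond : ∀ i : Fin (N + 1),
      g ⟨2 * i.val, by have := i.2; omega⟩ = g ⟨2 * i.val + 1, by have := i.2; omega⟩ := by
    by_contra h
    rw [if_neg h] at hf
    exact hf rfl
  obtain ⟨h1, h2⟩ := gateFold_eval N (List.finRange N) (List.nodup_finRange N) f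
  have h1' : ∀ j (hj : j < N),
      g ⟨2 * j + 2, by omega⟩ = f ⟨2 * j + 2, by omega⟩ + f ⟨2 * j + 1, by omega⟩ :=
    fun j hj => h1 ⟨j, hj⟩ (List.mem_finRange _)
  have hodd' : ∀ m (hm : m < 2 * N + 2), (∀ i : Fin N, m ≠ 2 * i.val + 2) →
      g ⟨m, hm⟩ = f ⟨m, hm⟩ :=
    fun m hm h => h2 ⟨m, hm⟩ (fun i _ => h i)
  have hcond' : ∀ j (hj : j < N + 1),
      g ⟨2 * j, by omega⟩ = g ⟨2 * j + 1, by omega⟩ := fun j hj => hcond ⟨j, hj⟩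
  have hrel : ∀ j (hj : j < N),
      f ⟨2 * j + 3, by omega⟩ = f ⟨2 * j + 1, by omega⟩ + f ⟨2 * j + 2, by omega⟩ := by
    intro j hj
    have hc : g ⟨2 * j + 2, by omega⟩ = g ⟨2 * j + 3, by omega⟩ := hcond' (j + 1) (by omega)
    rw [h1' j hj, hodd' (2 * j + 3) (by omega) (fun i => by omega)] at hc
    rw [← hc, add_comm]
  have h01 : f ⟨0, by omega⟩ = f ⟨1, by omega⟩ := by
    have hc : g ⟨0, by omega⟩ = g ⟨1, by omega⟩ := hcond' 0 (by omega)
    rwa [hodd' 0 (by omega) (fun i => by omega),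
      hodd' 1 (by omega) (fun i => by omega)] at hc
  set G : ℕ → ZMod 2 := fun n => if h : n < 2 * N + 2 then f ⟨n, h⟩ else 0 with hG
  have htel := telescope N G (by
    intro j hj
    simp only [hG]
    rw [dif_pos (by omega : 2 * j + 3 < 2 * N + 2),
      dif_pos (by omega : 2 * j + 1 < 2 * N + 2),
      dif_pos (by omega : 2 * j + 2 < 2 * N + 2)]
    exact hrel j hj)
  have hGN : G (2 * N + 1) = f ⟨2 * N + 1, by omega⟩ := by
    simp only [hG]; rw [dif_pos (by omega : 2 * N + 1 < 2 * N + 2)]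
  have hG1 : G 1 = f ⟨1, by omega⟩ := by
    simp only [hG]; rw [dif_pos (by omega : 1 < 2 * N + 2)]
  have hsum : ∑ j ∈ Finset.range N, G (2 * j + 2)
      = ∑ i : Fin N, f ⟨2 * (i.val + 1), by have := i.2; omega⟩ := by
    rw [← Fin.sum_univ_eq_sum_range (fun j => G (2 * j + 2)) N]
    apply Finset.sum_congr rfl
    intro i _
    show G (2 * i.val + 2) = _
    simp only [hG]
    rw [dif_pos (show 2 * i.val + 2 < 2 * N + 2 by have := i.2; omega)]
    exact congrArg f (Fin.ext (show 2 * i.val + 2 = 2 * (i.val + 1) by ring))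
  rw [hGN, hG1, hsum] at htel
  rw [htel, ← h01, ← add_assoc]
  have hself : f ⟨0, by omega⟩ + f ⟨0, by omega⟩ = 0 := by
    generalize f ⟨0, by omega⟩ = x
    fin_cases x <;> decide
  rw [hself, zero_add]
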